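/- For all a ≥ 2 and b ≥ 2, the Toads and Frogs position L T^a □ F^b R, where L is any finite sequence over {T,F} ending in F and R is any finite sequence over {T,F} beginning with T, has game value * = {0 | 0}. -/

import Mathlib

universe u

namespace SetTheory

/-- Pre-games (removed from Mathlib; restated with the December 2024 Mathlib meaning). -/
inductive PGame : Type (u + 1)
  | mk : ∀ α β : Type u, (α → PGame) → (β → PGame) → PGame

namespace PGame

/-- Auxiliary for `leLf`: recursion on the second game. -/
def leLfAux {xl xr : Type u} (xL : xl → PGame.{u}) (xR : xr → PGame.{u})
    (IHL : xl → PGame.{u} → Prop × Prop) (IHR : xr → PGame.{u} → Prop × Prop) :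
    PGame.{u} → Prop × Prop
  | mk yl yr yL yR =>
    ((∀ i, (IHL i (mk yl yr yL yR)).2) ∧ ∀ j, (leLfAux xL xR IHL IHR (yR j)).2,
      (∃ i, (leLfAux xL xR IHL IHR (yL i)).1) ∨ ∃ j, (IHR j (mk yl yr yL yR)).1)

/-- The pair (`x ≤ y`, `x ⧏ y`), defined by simultaneous recursion. -/
def leLf : PGame.{u} → PGame.{u} → Prop × Prop
  | mk _ _ xL xR => leLfAux xL xR (fun i => leLf (xL i)) (fun j => leLf (xR j))

instance : LE PGame.{u} := ⟨fun x y => (leLf x y).1⟩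

/-- Equivalence of pre-games: `x ≤ y ∧ y ≤ x`. -/
def Equiv (x y : PGame.{u}) : Prop := x ≤ y ∧ y ≤ x

instance : HasEquiv PGame.{u} := ⟨Equiv⟩

instance : Zero PGame.{u} := ⟨mk PEmpty PEmpty PEmpty.elim PEmpty.elim⟩

/-- Negation of a pre-game. -/
def neg : PGame.{u} → PGame.{u}
  | mk l r L R => mk r l (fun i => neg (R i)) (fun i => neg (L i))

instance : Neg PGame.{u} := ⟨neg⟩

/-- The pre-game `* = {0 | 0}`. -/
def star : PGame.{u} := mk PUnit PUnit (fun _ => 0) (fun _ => 0)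

end PGame

end SetTheory

open SetTheory

inductive Cell : Type
  | T | F | E
deriving DecidableEq

/-- Positions reachable from `l` by a single Toad (Left) move:
a Toad steps right into an empty square, or jumps over one adjacent Frog
into the empty square beyond. -/
def toadMoves : List Cell → List (List Cell)
  | [] => []
  | c :: rest =>
    (match c, rest with
     | Cell.T, Cell.E :: r => [Cell.E :: Cell.T :: r]
     | Cell.T, Cell.F :: Cell.E :: r => [Cell.E :: Cell.F :: Cell.T :: r]
     | _, _ => []) ++ (toadMoves rest).map (c :: ·)

/-- Positions reachable from `l` by a single Frog (Right) move. -/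
def frogMoves : List Cell → List (List Cell)
  | [] => []
  | c :: rest =>
    (match c, rest with
     | Cell.E, Cell.F :: r => [Cell.F :: Cell.E :: r]
     | Cell.E, Cell.T :: Cell.F :: r => [Cell.F :: Cell.T :: Cell.E :: r]
     | _, _ => []) ++ (frogMoves rest).map (c :: ·)

/-- A weight which strictly decreases with every legal move: each Toad
contributes the number of squares strictly to its right, each Frog the number
of squares strictly to its left. -/
def wt : List Cell → ℕ
  | [] => 0
  | c :: rest =>
    (if c = Cell.T then rest.length else 0) + rest.countP (· = Cell.F) + wt rest

/-- Game tree with fuel; since `wt` strictly decreases along moves and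
positions of weight `0` have no moves, `gameAux n l` is the true game
tree of `l` whenever `wt l ≤ n`. -/
def gameAux : ℕ → List Cell → PGame
  | 0, _ => 0
  | n + 1, l =>
    PGame.mk {m // m ∈ toadMoves l} {m // m ∈ frogMoves l}
      (fun m => gameAux n m.1) (fun m => gameAux n m.1)

/-- The game (PGame) associated to a Toads and Frogs position. -/
def tfGame (l : List Cell) : PGame := gameAux (wt l + 1) l

/-- The game `{x | y}` with a single Left option `x` and single Right option `y`. -/
def gmk (x y : PGame) : PGame :=
  PGame.mk PUnit PUnit (fun _ => x) (fun _ => y)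

/-- The canonical game of a natural number. -/
def natGame : ℕ → PGame
  | 0 => 0
  | n + 1 => PGame.mk PUnit PEmpty (fun _ => natGame n) (fun x => x.elim)

/-- The canonical game of an integer. -/
def intGame : ℤ → PGame
  | Int.ofNat n => natGame n
  | Int.negSucc n => -natGame (n + 1)

/-- `(TF)^b` : the block `TF` repeated `b` times. -/
def tfBlock (b : ℕ) : List Cell := (List.replicate b [Cell.T, Cell.F]).flatten

namespace SetTheory.PGame

def LeftMoves : PGame.{u} → Type u
  | mk l _ _ _ => l

def RightMoves : PGame.{u} → Type u
  | mk _ r _ _ => r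

def moveLeft : (g : PGame.{u}) → LeftMoves g → PGame.{u}
  | mk _ _ L _ => L

def moveRight : (g : PGame.{u}) → RightMoves g → PGame.{u}
  | mk _ _ _ R => R

def LF (x y : PGame.{u}) : Prop := (leLf x y).2

@[simp] theorem moveLeft_mk {xl xr : Type u} {xL : xl → PGame.{u}} {xR : xr → PGame.{u}} :
    (mk xl xr xL xR).moveLeft = xL := rfl

@[simp] theorem moveRight_mk {xl xr : Type u} {xL : xl → PGame.{u}} {xR : xr → PGame.{u}} :
    (mk xl xr xL xR).moveRight = xR := rfl

theorem star_moveLeft (x : LeftMoves star.{u}) : star.moveLeft x = 0 := rfl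

theorem star_moveRight (x : RightMoves star.{u}) : star.moveRight x = 0 := rfl

theorem le_iff_forall_lf {x y : PGame.{u}} :
    x ≤ y ↔ (∀ i, LF (x.moveLeft i) y) ∧ ∀ j, LF x (y.moveRight j) := by
  cases x
  cases y
  exact Iff.rfl

theorem lf_iff_exists_le {x y : PGame.{u}} :
    LF x y ↔ (∃ i, x ≤ y.moveLeft i) ∨ ∃ j, x.moveRight j ≤ y := by
  cases x
  cases y
  exact Iff.rfl

theorem zero_le {x : PGame.{u}} : 0 ≤ x ↔ ∀ j, ∃ i, 0 ≤ (x.moveRight j).moveLeft i := by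
  rw [le_iff_forall_lf]
  simp only [lf_iff_exists_le]
  constructor
  · rintro ⟨-, h⟩ j
    rcases h j with h | ⟨j', -⟩
    · exact h
    · exact PEmpty.elim j'
  · intro h
    exact ⟨fun i => PEmpty.elim i, fun j => Or.inl (h j)⟩

theorem le_zero {x : PGame.{u}} : x ≤ 0 ↔ ∀ i, ∃ j, (x.moveLeft i).moveRight j ≤ 0 := by
  rw [le_iff_forall_lf]
  simp only [lf_iff_exists_le]
  constructor
  · rintro ⟨h, -⟩ i
    rcases h i with ⟨i', -⟩ | h
    · exact PEmpty.elim i'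
    · exact h
  · intro h
    exact ⟨fun i => Or.inr (h i), fun j => PEmpty.elim j⟩

end SetTheory.PGame

namespace TFaux

open Cell

/-! ### Definitional unfolding lemmas for the move functions -/

lemma tm_F (r : List Cell) : toadMoves (F :: r) = (toadMoves r).map (F :: ·) := rfl
lemma tm_E (r : List Cell) : toadMoves (E :: r) = (toadMoves r).map (E :: ·) := rfl
lemma tm_T_nil : toadMoves [T] = [] := rfl
lemma tm_T_T (r : List Cell) : toadMoves (T :: T :: r) = (toadMoves (T :: r)).map (T :: ·) := rfl
lemma tm_T_E (r : List Cell) :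
    toadMoves (T :: E :: r) = [E :: T :: r] ++ (toadMoves (E :: r)).map (T :: ·) := rfl
lemma tm_T_F_nil : toadMoves [T, F] = [] := rfl
lemma tm_T_F_T (r : List Cell) :
    toadMoves (T :: F :: T :: r) = (toadMoves (F :: T :: r)).map (T :: ·) := rfl
lemma tm_T_F_F (r : List Cell) :
    toadMoves (T :: F :: F :: r) = (toadMoves (F :: F :: r)).map (T :: ·) := rfl
lemma tm_T_F_E (r : List Cell) :
    toadMoves (T :: F :: E :: r) =
      [E :: F :: T :: r] ++ (toadMoves (F :: E :: r)).map (T :: ·) := rfl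

lemma fm_T (r : List Cell) : frogMoves (T :: r) = (frogMoves r).map (T :: ·) := rfl
lemma fm_F (r : List Cell) : frogMoves (F :: r) = (frogMoves r).map (F :: ·) := rfl
lemma fm_E_nil : frogMoves [E] = [] := rfl
lemma fm_E_F (r : List Cell) :
    frogMoves (E :: F :: r) = [F :: E :: r] ++ (frogMoves (F :: r)).map (E :: ·) := rfl
lemma fm_E_E (r : List Cell) :
    frogMoves (E :: E :: r) = (frogMoves (E :: r)).map (E :: ·) := rfl
lemma fm_E_T_nil : frogMoves [E, T] = [] := rfl
lemma fm_E_T_T (r : List Cell) :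
    frogMoves (E :: T :: T :: r) = (frogMoves (T :: T :: r)).map (E :: ·) := rfl
lemma fm_E_T_E (r : List Cell) :
    frogMoves (E :: T :: E :: r) = (frogMoves (T :: E :: r)).map (E :: ·) := rfl
lemma fm_E_T_F (r : List Cell) :
    frogMoves (E :: T :: F :: r) =
      [F :: T :: E :: r] ++ (frogMoves (T :: F :: r)).map (E :: ·) := rfl

/-! ### Positions without empty square have no moves -/

lemma toad_nil : ∀ {l : List Cell}, Cell.E ∉ l → toadMoves l = []
  | [], _ => rfl
  | F :: r, h => by
      rw [tm_F, toad_nil (by simp_all), List.map_nil]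
  | E :: r, h => by simp at h
  | [T], _ => rfl
  | T :: T :: r, h => by
      rw [tm_T_T, toad_nil (by simp_all), List.map_nil]
  | T :: E :: r, h => by simp at h
  | [T, F], _ => rfl
  | T :: F :: T :: r, h => by
      rw [tm_T_F_T, toad_nil (by simp_all), List.map_nil]
  | T :: F :: F :: r, h => by
      rw [tm_T_F_F, toad_nil (by simp_all), List.map_nil]
  | T :: F :: E :: r, h => by simp at h

lemma frog_nil : ∀ {l : List Cell}, Cell.E ∉ l → frogMoves l = []
  | [], _ => rfl
  | T :: r, h => by rw [fm_T, frog_nil (by simp_all), List.map_nil]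
  | F :: r, h => by rw [fm_F, frog_nil (by simp_all), List.map_nil]
  | E :: r, h => by simp at h

/-! ### Characterisation of the moves of a position with a single empty square -/

/-- Intended: toad moves of `Z ++ E :: B`. -/
def tse : List Cell → List Cell → List (List Cell)
  | [], _ => []
  | c :: Z, B =>
    (match c, Z with
     | Cell.T, [] => [Cell.E :: Cell.T :: B]
     | Cell.T, [Cell.F] => [Cell.E :: Cell.F :: Cell.T :: B]
     | _, _ => []) ++ (tse Z B).map (c :: ·)

/-- Intended: frog moves of `Z ++ E :: B` are `(fse B).map (Z ++ ·)`. -/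
def fse : List Cell → List (List Cell)
  | Cell.F :: B => [Cell.F :: Cell.E :: B]
  | Cell.T :: Cell.F :: B => [Cell.F :: Cell.T :: Cell.E :: B]
  | _ => []

lemma ts_F (Z B : List Cell) : tse (F :: Z) B = (tse Z B).map (F :: ·) := rfl
lemma ts_E (Z B : List Cell) : tse (E :: Z) B = (tse Z B).map (E :: ·) := rfl
lemma ts_T_nil (B : List Cell) : tse [T] B = [E :: T :: B] := by
  show [E :: T :: B] ++ (tse [] B).map (T :: ·) = _
  rfl
lemma ts_T_T (Z B : List Cell) : tse (T :: T :: Z) B = (tse (T :: Z) B).map (T :: ·) := rfl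
lemma ts_T_E (Z B : List Cell) : tse (T :: E :: Z) B = (tse (E :: Z) B).map (T :: ·) := rfl
lemma ts_T_F_nil (B : List Cell) : tse [T, F] B = [E :: F :: T :: B] := by
  show [E :: F :: T :: B] ++ (tse [F] B).map (T :: ·) = _
  rfl
lemma ts_T_F_cons (c : Cell) (Z B : List Cell) :
    tse (T :: F :: c :: Z) B = (tse (F :: c :: Z) B).map (T :: ·) := rfl

lemma toad_split : ∀ {Z B : List Cell}, Cell.E ∉ Z → Cell.E ∉ B →
    toadMoves (Z ++ Cell.E :: B) = tse Z B
  | [], B, _, hB => by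
      rw [List.nil_append, tm_E, toad_nil hB]
      rfl
  | F :: Z, B, hZ, hB => by
      rw [List.cons_append, tm_F, toad_split (by simp_all) hB, ts_F]
  | E :: Z, B, hZ, hB => by simp at hZ
  | [T], B, hZ, hB => by
      rw [List.cons_append, List.nil_append, tm_T_E, tm_E, toad_nil hB, ts_T_nil]
      rfl
  | T :: T :: Z, B, hZ, hB => by
      rw [List.cons_append, show (T :: Z) ++ E :: B = T :: (Z ++ E :: B) from rfl,
        tm_T_T, ← List.cons_append, toad_split (by simp_all) hB, ts_T_T]
  | T :: E :: Z, B, hZ, hB => by simp at hZ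
  | [T, F], B, hZ, hB => by
      rw [List.cons_append, List.cons_append, List.nil_append, tm_T_F_E, tm_F, tm_E,
        toad_nil hB, ts_T_F_nil]
      rfl
  | T :: F :: c :: Z, B, hZ, hB => by
      rw [show (T :: F :: c :: Z) ++ E :: B = T :: F :: c :: (Z ++ E :: B) from rfl]
      have hrec : toadMoves ((F :: c :: Z) ++ E :: B) = tse (F :: c :: Z) B :=
        toad_split (by simp_all) hB
      rw [List.cons_append, List.cons_append] at hrec
      have hc : c = T ∨ c = F := by
        cases c
        · exact Or.inl rfl
        · exact Or.inr rfl
        · simp at hZ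
      rcases hc with rfl | rfl
      · rw [tm_T_F_T, hrec, ts_T_F_cons]
      · rw [tm_T_F_F, hrec, ts_T_F_cons]

lemma frog_split : ∀ {Z B : List Cell}, Cell.E ∉ Z → Cell.E ∉ B →
    frogMoves (Z ++ Cell.E :: B) = (fse B).map (Z ++ ·)
  | [], B, _, hB => by
      rw [List.nil_append]
      rcases B with _ | ⟨c, B⟩
      · rfl
      · cases c with
        | T =>
          rcases B with _ | ⟨d, B⟩
          · rfl
          · cases d with
            | T => rw [fm_E_T_T, frog_nil (show E ∉ T :: T :: B by simp_all)]; rfl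
            | F => rw [fm_E_T_F, frog_nil (show E ∉ T :: F :: B by simp_all)]; simp [fse]
            | E => simp at hB
        | F => rw [fm_E_F, frog_nil (show E ∉ F :: B by simp_all)]; simp [fse]
        | E => simp at hB
  | c :: Z, B, hZ, hB => by
      rw [List.cons_append]
      have hrec := frog_split (Z := Z) (B := B) (by simp_all) hB
      cases c with
      | T => rw [fm_T, hrec, List.map_map]; rfl
      | F => rw [fm_F, hrec, List.map_map]; rfl
      | E => simp at hZ

lemma tse_T : ∀ (Z B : List Cell), tse (Z ++ [Cell.T]) B = [Z ++ Cell.E :: Cell.T :: B]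
  | [], B => ts_T_nil B
  | T :: Z, B => by
      rcases Z with _ | ⟨c, Z⟩
      · rw [show ([T] : List Cell) ++ [T] = T :: T :: [] from rfl, ts_T_T, ts_T_nil]
        rfl
      · rw [show (T :: c :: Z) ++ [T] = T :: ((c :: Z) ++ [T]) from rfl]
        rcases c with _ | _ | _
        · rw [show (T :: Z) ++ [T] = T :: (Z ++ [T]) from rfl, ts_T_T,
            ← List.cons_append, tse_T]
          rfl
        · rcases Z with _ | ⟨d, Z⟩
          · rw [show ([F] : List Cell) ++ [T] = F :: T :: [] from rfl, ts_T_F_cons, ts_F, ts_T_nil]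
            rfl
          · rw [show (F :: d :: Z) ++ [T] = F :: d :: (Z ++ [T]) from rfl, ts_T_F_cons,
              ← List.cons_append, ← List.cons_append, tse_T]
            rfl
        · rw [show (E :: Z) ++ [T] = E :: (Z ++ [T]) from rfl, ts_T_E,
            ← List.cons_append, tse_T]
          rfl
  | F :: Z, B => by
      rw [show (F :: Z) ++ [T] = F :: (Z ++ [T]) from rfl, ts_F, tse_T]
      rfl
  | E :: Z, B => by
      rw [show (E :: Z) ++ [T] = E :: (Z ++ [T]) from rfl, ts_E, tse_T]
      rfl



lemma tse_F_mem : ∀ {Z B p : List Cell}, p ∈ tse (Z ++ [Cell.F]) B →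
    ∃ Z', Z = Z' ++ [Cell.T] ∧ p = Z' ++ Cell.E :: Cell.F :: Cell.T :: B
  | [], B, p, h => by simp [show ([F] : List Cell) = F :: [] from rfl, ts_F, tse] at h
  | T :: Z, B, p, h => by
      rcases Z with _ | ⟨c, Z⟩
      · rw [show ([T] : List Cell) ++ [F] = T :: F :: [] from rfl, ts_T_F_nil] at h
        exact ⟨[], rfl, by simpa using h⟩
      · rw [show (T :: c :: Z) ++ [F] = T :: c :: (Z ++ [F]) from rfl] at h
        have h' : p ∈ (tse (c :: (Z ++ [F])) B).map (T :: ·) := by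
          rcases c with _ | _ | _
          · rwa [ts_T_T] at h
          · rcases Z with _ | ⟨d, Z⟩
            · rwa [show (F : Cell) :: ([] ++ [F]) = F :: F :: [] from rfl, ts_T_F_cons] at h
            · rwa [show (F : Cell) :: ((d :: Z) ++ [F]) = F :: d :: (Z ++ [F]) from rfl,
                ts_T_F_cons] at h
          · rwa [ts_T_E] at h
        obtain ⟨q, hq, rfl⟩ := List.mem_map.1 h'
        obtain ⟨Z', hZ', rfl⟩ := tse_F_mem (by rwa [← List.cons_append] at hq)
        exact ⟨T :: Z', by rw [List.cons_append, ← hZ'], rfl⟩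
  | F :: Z, B, p, h => by
      rw [show (F :: Z) ++ [F] = F :: (Z ++ [F]) from rfl, ts_F] at h
      obtain ⟨q, hq, rfl⟩ := List.mem_map.1 h
      obtain ⟨Z', hZ', rfl⟩ := tse_F_mem hq
      exact ⟨F :: Z', by rw [List.cons_append, ← hZ'], rfl⟩
  | E :: Z, B, p, h => by
      rw [show (E :: Z) ++ [F] = E :: (Z ++ [F]) from rfl, ts_E] at h
      obtain ⟨q, hq, rfl⟩ := List.mem_map.1 h
      obtain ⟨Z', hZ', rfl⟩ := tse_F_mem hq
      exact ⟨E :: Z', by rw [List.cons_append, ← hZ'], rfl⟩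

lemma tse_TF_mem : ∀ (Z B : List Cell),
    Z ++ Cell.E :: Cell.F :: Cell.T :: B ∈ tse ((Z ++ [Cell.T]) ++ [Cell.F]) B
  | [], B => by
      rw [show (([] : List Cell) ++ [T]) ++ [F] = T :: F :: [] from rfl, ts_T_F_nil]
      simp
  | c :: Z, B => by
      rw [show ((c :: Z) ++ [T]) ++ [F] = c :: ((Z ++ [T]) ++ [F]) from rfl]
      have hmem := tse_TF_mem Z B
      have : c :: (Z ++ E :: F :: T :: B) ∈ (tse ((Z ++ [T]) ++ [F]) B).map (c :: ·) :=
        List.mem_map.2 ⟨_, hmem, rfl⟩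
      have hne : ∃ d Z', (Z ++ [T]) ++ [F] = d :: Z' ∧ (Z' ≠ [] ) := by
        rcases Z with _ | ⟨d, Z⟩
        · exact ⟨T, [F], rfl, by simp⟩
        · exact ⟨d, (Z ++ [T]) ++ [F], by simp, by simp⟩
      obtain ⟨d, Z', hdZ, hZ'⟩ := hne
      rw [hdZ]
      rw [hdZ] at this
      rcases Z' with _ | ⟨e, Z''⟩
      · exact absurd rfl hZ'
      · cases c with
        | T =>
          cases d with
          | T => rw [ts_T_T]; exact this
          | F =>
            rw [ts_T_F_cons]
            exact this
          | E => rw [ts_T_E]; exact this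
        | F => rw [ts_F]; exact this
        | E => rw [ts_E]; exact this

/-! ### Weight lemmas -/

lemma wt_append : ∀ (Z Y : List Cell), wt (Z ++ Y) =
    wt Z + wt Y + (Z.countP (· = Cell.T)) * Y.length + (Y.countP (· = Cell.F)) * Z.length
  | [], Y => by simp [wt]
  | c :: Z, Y => by
      rw [List.cons_append, wt, wt, wt_append Z Y]
      simp only [List.countP_cons, List.length_append, List.countP_append, List.length_cons]
      cases c <;> simp <;> ring

lemma wt_slide_t (Z B : List Cell) :
    wt (Z ++ Cell.E :: Cell.T :: B) < wt (Z ++ Cell.T :: Cell.E :: B) := by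
  rw [wt_append, wt_append]
  simp [wt, List.countP_cons]
  all_goals omega

lemma wt_jump_t (Z B : List Cell) :
    wt (Z ++ Cell.E :: Cell.F :: Cell.T :: B) < wt (Z ++ Cell.T :: Cell.F :: Cell.E :: B) := by
  rw [wt_append, wt_append]
  simp [wt, List.countP_cons]
  all_goals omega

lemma wt_slide_f (Z B : List Cell) :
    wt (Z ++ Cell.F :: Cell.E :: B) < wt (Z ++ Cell.E :: Cell.F :: B) := by
  rw [wt_append, wt_append]
  simp [wt, List.countP_cons]
  all_goals omega

lemma wt_jump_f (Z B : List Cell) :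
    wt (Z ++ Cell.F :: Cell.T :: Cell.E :: B) < wt (Z ++ Cell.E :: Cell.T :: Cell.F :: B) := by
  rw [wt_append, wt_append]
  simp [wt, List.countP_cons]
  all_goals omega

lemma gameAux_succ (n : ℕ) (l : List Cell) :
    gameAux (n + 1) l = PGame.mk {m // m ∈ toadMoves l} {m // m ∈ frogMoves l}
      (fun m => gameAux n m.1) (fun m => gameAux n m.1) := rfl

/-- `X □ T Y  ≥ 0` for arbitrary `X`, `Y`. -/
lemma W1 : ∀ (n : ℕ) (X Y : List Cell), Cell.E ∉ X → Cell.E ∉ Y →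
    wt (X ++ Cell.E :: Cell.T :: Y) < n → 0 ≤ gameAux n (X ++ Cell.E :: Cell.T :: Y) := by
  intro n
  induction n using Nat.strong_induction_on with
  | _ n IH =>
    intro X Y hX hY hw
    obtain ⟨m, rfl⟩ : ∃ m, n = m + 1 := ⟨n - 1, by omega⟩
    rw [gameAux_succ, PGame.zero_le]
    rintro ⟨p, hpm⟩
    have hfr : frogMoves (X ++ Cell.E :: (Cell.T :: Y)) = (fse (Cell.T :: Y)).map (X ++ ·) :=
      frog_split hX (by simpa using hY)
    rw [hfr] at hpm
    rcases Y with _ | ⟨c, Y⟩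
    · exact absurd hpm (by simp [fse])
    · cases c with
      | T => exact absurd hpm (by simp [fse])
      | E => simp at hY
      | F =>
        -- unique right option : the frog jump to X ++ F :: T :: E :: Y
        have hp : p = X ++ F :: T :: E :: Y := by simpa [fse] using hpm
        subst hp
        have hw1 : wt (X ++ F :: T :: E :: Y) < wt (X ++ E :: T :: F :: Y) := wt_jump_f X Y
        obtain ⟨m', rfl⟩ : ∃ m', m = m' + 1 := ⟨m - 1, by omega⟩
        simp only [PGame.moveRight_mk]
        rw [gameAux_succ]
        -- left response : toad slide to X ++ F :: E :: T :: Y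
        have htd : toadMoves (X ++ F :: T :: E :: Y) = [(X ++ [F]) ++ E :: T :: Y] := by
          have h1 : toadMoves (((X ++ [F]) ++ [T]) ++ E :: Y) = tse ((X ++ [F]) ++ [T]) Y :=
            toad_split (by simp_all) (by simp_all)
          rw [tse_T] at h1
          simpa using h1
        refine ⟨⟨(X ++ [F]) ++ E :: T :: Y, by rw [htd]; simp⟩, ?_⟩
        simp only [PGame.moveLeft_mk]
        have hw2 : wt ((X ++ [F]) ++ E :: T :: Y) < wt ((X ++ [F]) ++ T :: E :: Y) :=
          wt_slide_t (X ++ [F]) Y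
        have hx : (X ++ [F]) ++ T :: E :: Y = X ++ F :: T :: E :: Y := by simp
        refine IH m' (by omega) (X ++ [F]) Y (by simp_all) (by simp_all) ?_
        rw [hx] at hw2
        omega

/-- `X F □ Y ≤ 0` for arbitrary `X`, `Y`. -/
lemma W2 : ∀ (n : ℕ) (X Y : List Cell), Cell.E ∉ X → Cell.E ∉ Y →
    wt (X ++ Cell.F :: Cell.E :: Y) < n → gameAux n (X ++ Cell.F :: Cell.E :: Y) ≤ 0 := by
  intro n
  induction n using Nat.strong_induction_on with
  | _ n IH =>
    intro X Y hX hY hw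
    obtain ⟨m, rfl⟩ : ∃ m, n = m + 1 := ⟨n - 1, by omega⟩
    rw [gameAux_succ, PGame.le_zero]
    rintro ⟨p, hpm⟩
    have htd : toadMoves (X ++ Cell.F :: Cell.E :: Y) = tse (X ++ [F]) Y := by
      have := toad_split (Z := X ++ [F]) (B := Y) (by simp_all) hY
      simpa using this
    rw [htd] at hpm
    obtain ⟨Z', hZ', hp⟩ := tse_F_mem hpm
    subst hp
    have hEZ' : Cell.E ∉ Z' := fun h => hX (by rw [hZ']; simp [h])
    have hw1 : wt (Z' ++ E :: F :: T :: Y) < wt (Z' ++ T :: F :: E :: Y) := wt_jump_t Z' Y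
    have hxx : Z' ++ T :: F :: E :: Y = X ++ F :: E :: Y := by rw [hZ']; simp
    obtain ⟨m', rfl⟩ : ∃ m', m = m' + 1 := ⟨m - 1, by rw [hxx] at hw1; omega⟩
    simp only [PGame.moveLeft_mk]
    rw [gameAux_succ]
    -- right response : frog slide to Z' ++ F :: E :: T :: Y
    have hfr : frogMoves (Z' ++ E :: F :: T :: Y) = [Z' ++ F :: E :: T :: Y] := by
      have := frog_split (Z := Z') (B := F :: T :: Y) hEZ' (by simp [hY])
      simpa [fse] using this
    refine ⟨⟨Z' ++ F :: E :: T :: Y, by rw [hfr]; simp⟩, ?_⟩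
    simp only [PGame.moveRight_mk]
    have hw2 : wt (Z' ++ F :: E :: T :: Y) < wt (Z' ++ E :: F :: T :: Y) :=
      wt_slide_f Z' (T :: Y)
    refine IH m' (by omega) Z' (T :: Y) hEZ' (by simp [hY]) ?_
    rw [hxx] at hw1
    omega

/-- `* ≤ X T □ F T Y`. -/
lemma Estar (n : ℕ) (X Y : List Cell) (hX : Cell.E ∉ X) (hY : Cell.E ∉ Y)
    (hw : wt (X ++ T :: E :: F :: T :: Y) < n) :
    PGame.star ≤ gameAux n (X ++ T :: E :: F :: T :: Y) := by
  obtain ⟨m, rfl⟩ : ∃ m, n = m + 1 := ⟨n - 1, by omega⟩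
  rw [gameAux_succ, PGame.le_iff_forall_lf]
  have htd : toadMoves (X ++ T :: E :: F :: T :: Y) = [X ++ E :: T :: F :: T :: Y] := by
    have := toad_split (Z := X ++ [T]) (B := F :: T :: Y) (by simp [hX]) (by simp [hY])
    rw [tse_T] at this
    simpa using this
  have hfr : frogMoves (X ++ T :: E :: F :: T :: Y) = [X ++ T :: F :: E :: T :: Y] := by
    have := frog_split (Z := X ++ [T]) (B := F :: T :: Y) (by simp [hX]) (by simp [hY])
    simpa [fse] using this
  constructor
  · intro i
    rw [PGame.star_moveLeft, PGame.lf_iff_exists_le]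
    left
    refine ⟨⟨X ++ E :: T :: F :: T :: Y, by rw [htd]; simp⟩, ?_⟩
    simp only [PGame.moveLeft_mk]
    have hw1 : wt (X ++ E :: T :: F :: T :: Y) < wt (X ++ T :: E :: F :: T :: Y) :=
      wt_slide_t X (F :: T :: Y)
    exact W1 m X (F :: T :: Y) hX (by simp [hY]) (by omega)
  · rintro ⟨p, hpm⟩
    rw [hfr] at hpm
    have hp : p = X ++ T :: F :: E :: T :: Y := by simpa using hpm
    subst hp
    simp only [PGame.moveRight_mk]
    rw [PGame.lf_iff_exists_le]
    right
    refine ⟨PUnit.unit, ?_⟩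
    show (0 : PGame) ≤ _
    have hw1 : wt (X ++ T :: F :: E :: T :: Y) < wt (X ++ T :: E :: F :: T :: Y) := by
      have := wt_slide_f (X ++ [T]) (T :: Y)
      simpa using this
    have hsh : (X ++ [T, F]) ++ E :: T :: Y = X ++ T :: F :: E :: T :: Y := by simp
    rw [← hsh]
    exact W1 m (X ++ [T, F]) Y (by simp [hX]) hY (by rw [hsh]; omega)

/-- `X F T □ F Y ≤ *`. -/
lemma Estar' (n : ℕ) (X Y : List Cell) (hX : Cell.E ∉ X) (hY : Cell.E ∉ Y)
    (hw : wt (X ++ F :: T :: E :: F :: Y) < n) :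
    gameAux n (X ++ F :: T :: E :: F :: Y) ≤ PGame.star := by
  obtain ⟨m, rfl⟩ : ∃ m, n = m + 1 := ⟨n - 1, by omega⟩
  rw [gameAux_succ, PGame.le_iff_forall_lf]
  have htd : toadMoves (X ++ F :: T :: E :: F :: Y) = [X ++ F :: E :: T :: F :: Y] := by
    have := toad_split (Z := (X ++ [F]) ++ [T]) (B := F :: Y) (by simp [hX]) (by simp [hY])
    rw [tse_T] at this
    simpa using this
  have hfr : frogMoves (X ++ F :: T :: E :: F :: Y) = [X ++ F :: T :: F :: E :: Y] := by
    have := frog_split (Z := X ++ [F, T]) (B := F :: Y) (by simp [hX]) (by simp [hY])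
    simpa [fse] using this
  constructor
  · rintro ⟨p, hpm⟩
    rw [htd] at hpm
    have hp : p = X ++ F :: E :: T :: F :: Y := by simpa using hpm
    subst hp
    simp only [PGame.moveLeft_mk]
    rw [PGame.lf_iff_exists_le]
    left
    refine ⟨PUnit.unit, ?_⟩
    show _ ≤ (0 : PGame)
    have hw1 : wt (X ++ F :: E :: T :: F :: Y) < wt (X ++ F :: T :: E :: F :: Y) := by
      have := wt_slide_t (X ++ [F]) (F :: Y)
      simpa using this
    exact W2 m X (T :: F :: Y) hX (by simp [hY]) (by omega)
  · intro u
    rw [PGame.star_moveRight, PGame.lf_iff_exists_le]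
    right
    refine ⟨⟨X ++ F :: T :: F :: E :: Y, by rw [hfr]; simp⟩, ?_⟩
    simp only [PGame.moveRight_mk]
    have hw1 : wt (X ++ F :: T :: F :: E :: Y) < wt (X ++ F :: T :: E :: F :: Y) := by
      have := wt_slide_f (X ++ [F, T]) Y
      simpa using this
    have hsh : (X ++ [F, T]) ++ F :: E :: Y = X ++ F :: T :: F :: E :: Y := by simp
    rw [← hsh]
    exact W2 m (X ++ [F, T]) Y (by simp [hX]) hY (by rw [hsh]; omega)

end TFaux

open TFaux Cell

/-- `L T^a □ F^b R = *` for `a, b ≥ 2`, `L` a `{T,F}`-string ending in `F`,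
`R` a `{T,F}`-string beginning with `T`. -/
theorem LTaboxFbR_eq_star (a b : ℕ) (ha : 2 ≤ a) (hb : 2 ≤ b)
    (L R : List Cell)
    (hLE : Cell.E ∉ L) (hRE : Cell.E ∉ R)
    (hL : L.getLast? = some Cell.F) (hR : R.head? = some Cell.T) :
    tfGame (L ++ List.replicate a Cell.T ++ [Cell.E] ++
      List.replicate b Cell.F ++ R) ≈ PGame.star := by
  obtain ⟨a₁, rfl⟩ : ∃ k, a = k + 2 := ⟨a - 2, by omega⟩
  obtain ⟨b₁, rfl⟩ : ∃ k, b = k + 2 := ⟨b - 2, by omega⟩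
  obtain ⟨L₀, rfl⟩ : ∃ L₀, L = L₀ ++ [Cell.F] := by
    rcases List.eq_nil_or_concat L with rfl | ⟨L₀, x, rfl⟩
    · simp at hL
    · rw [List.concat_eq_append] at hLE hL ⊢
      have hx : x = Cell.F := by
        have h := hL
        rw [List.getLast?_concat] at h
        exact Option.some.inj h
      exact ⟨L₀, by rw [hx]⟩
  obtain ⟨R₀, rfl⟩ : ∃ R₀, R = Cell.T :: R₀ := by
    rcases R with _ | ⟨r₀, R₀⟩
    · simp at hR
    · exact ⟨R₀, by rw [show r₀ = Cell.T from by simpa using hR]⟩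
  -- abbreviations
  set A : List Cell := (L₀ ++ [Cell.F]) ++ List.replicate (a₁ + 1) Cell.T with hA
  set B₀ : List Cell := List.replicate b₁ Cell.F ++ Cell.T :: R₀ with hB₀
  have hEA : Cell.E ∉ A := by
    rw [hA]
    intro h
    rcases List.mem_append.1 h with h | h
    · exact hLE h
    · exact absurd (List.eq_of_mem_replicate h) (by simp)
  have hEB : Cell.E ∉ Cell.F :: Cell.F :: B₀ := by
    rw [hB₀]
    intro h
    rcases List.mem_cons.1 h with h | h
    · exact Cell.noConfusion h
    rcases List.mem_cons.1 h with h | h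
    · exact Cell.noConfusion h
    rcases List.mem_append.1 h with h | h
    · exact absurd (List.eq_of_mem_replicate h) (by simp)
    · exact hRE h
  have hEB₀ : Cell.E ∉ B₀ := fun h => hEB (by simp [h])
  have hpos : (L₀ ++ [Cell.F]) ++ List.replicate (a₁ + 2) Cell.T ++ [Cell.E] ++
      List.replicate (b₁ + 2) Cell.F ++ (Cell.T :: R₀) =
      A ++ T :: E :: F :: F :: B₀ := by
    rw [hA, hB₀, show a₁ + 2 = (a₁ + 1) + 1 from rfl, List.replicate_succ' (n := a₁ + 1) (a := Cell.T),
      show b₁ + 2 = (b₁ + 1) + 1 from rfl, List.replicate_succ (a := Cell.F) (n := b₁ + 1),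
      List.replicate_succ (a := Cell.F) (n := b₁)]
    simp
  rw [hpos, tfGame]
  set P : List Cell := A ++ T :: E :: F :: F :: B₀ with hP
  obtain ⟨m₂, hm₂⟩ : ∃ k, wt P = k + 1 := by
    refine ⟨wt P - 1, ?_⟩
    have h := wt_slide_t A (F :: F :: B₀)
    rw [← hP] at h
    omega
  -- characterisations of the two options of P
  have htd : toadMoves P = [A ++ E :: T :: F :: F :: B₀] := by
    have h := toad_split (Z := A ++ [T]) (B := F :: F :: B₀) (by simp [hEA]) hEB
    rw [tse_T] at h
    rw [hP]
    simpa using h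
  have hfr : frogMoves P = [A ++ T :: F :: E :: F :: B₀] := by
    have h := frog_split (Z := A ++ [T]) (B := F :: F :: B₀) (by simp [hEA]) hEB
    rw [hP]
    simpa [fse] using h
  have hwP : wt P < wt P + 1 := Nat.lt_succ_self _
  rw [gameAux_succ]
  constructor
  · -- P ≤ *
    rw [PGame.le_iff_forall_lf]
    constructor
    · rintro ⟨p, hpm⟩
      rw [htd] at hpm
      have hp : p = A ++ E :: T :: F :: F :: B₀ := by simpa using hpm
      subst hp
      simp only [PGame.moveLeft_mk]
      rw [hm₂, gameAux_succ, PGame.lf_iff_exists_le]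
      right
      -- frog jump from A ++ E :: T :: F :: F :: B₀ to A ++ F :: T :: E :: F :: B₀
      have hfr2 : frogMoves (A ++ E :: T :: F :: F :: B₀) =
          [A ++ F :: T :: E :: F :: B₀] := by
        have h := frog_split (Z := A) (B := T :: F :: F :: B₀) hEA (by simpa using hEB)
        simpa [fse] using h
      refine ⟨⟨A ++ F :: T :: E :: F :: B₀, by rw [hfr2]; simp⟩, ?_⟩
      simp only [PGame.moveRight_mk]
      have hd1 : wt (A ++ F :: T :: E :: F :: B₀) < wt (A ++ E :: T :: F :: F :: B₀) :=
        wt_jump_f A (F :: B₀)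
      have hd2 : wt (A ++ E :: T :: F :: F :: B₀) < wt P := by
        have h := wt_slide_t A (F :: F :: B₀)
        rw [← hP] at h
        exact h
      exact Estar' m₂ A B₀ hEA hEB₀ (by omega)
    · intro u
      rw [PGame.star_moveRight, PGame.lf_iff_exists_le]
      right
      refine ⟨⟨A ++ T :: F :: E :: F :: B₀, by rw [hfr]; simp⟩, ?_⟩
      simp only [PGame.moveRight_mk]
      have hw1 : wt (A ++ T :: F :: E :: F :: B₀) < wt P := by
        have := wt_slide_f (A ++ [T]) (F :: B₀)
        rw [hP]
        simpa using this
      have hsh : (A ++ [T]) ++ F :: E :: (F :: B₀) = A ++ T :: F :: E :: F :: B₀ := by simp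
      rw [← hsh]
      exact W2 (wt P) (A ++ [T]) (F :: B₀) (by simp [hEA]) (by simpa using hEB₀)
        (by rw [hsh]; omega)
  · -- * ≤ P
    rw [PGame.le_iff_forall_lf]
    constructor
    · intro i
      rw [PGame.star_moveLeft, PGame.lf_iff_exists_le]
      left
      refine ⟨⟨A ++ E :: T :: F :: F :: B₀, by rw [htd]; simp⟩, ?_⟩
      simp only [PGame.moveLeft_mk]
      have hw1 : wt (A ++ E :: T :: F :: F :: B₀) < wt P := by
        have := wt_slide_t A (F :: F :: B₀)
        rw [hP]
        omega
      exact W1 (wt P) A (F :: F :: B₀) hEA (by simpa using hEB) (by omega)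
    · rintro ⟨p, hpm⟩
      rw [hfr] at hpm
      have hp : p = A ++ T :: F :: E :: F :: B₀ := by simpa using hpm
      subst hp
      simp only [PGame.moveRight_mk]
      rw [hm₂, gameAux_succ, PGame.lf_iff_exists_le]
      left
      -- toad jump from A ++ T :: F :: E :: F :: B₀ to A ++ E :: F :: T :: F :: B₀
      have htd2 : A ++ E :: F :: T :: (F :: B₀) ∈
          toadMoves (A ++ T :: F :: E :: F :: B₀) := by
        have h := toad_split (Z := (A ++ [T]) ++ [F]) (B := F :: B₀)
          (by simp [hEA]) (by simpa using hEB₀)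
        have hmem := tse_TF_mem A (F :: B₀)
        rw [← h] at hmem
        simpa using hmem
      refine ⟨⟨A ++ E :: F :: T :: F :: B₀, htd2⟩, ?_⟩
      simp only [PGame.moveLeft_mk]
      have hAsh : A = ((L₀ ++ [Cell.F]) ++ List.replicate a₁ Cell.T) ++ [Cell.T] := by
        rw [hA, List.replicate_succ' (n := a₁)]
        simp
      have hq : A ++ E :: F :: T :: F :: B₀ =
          ((L₀ ++ [Cell.F]) ++ List.replicate a₁ Cell.T) ++
            T :: E :: F :: T :: (F :: B₀) := by
        rw [hAsh]
        simp
      have hd1 : wt (A ++ E :: F :: T :: F :: B₀) < wt (A ++ T :: F :: E :: F :: B₀) :=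
        wt_jump_t A (F :: B₀)
      have hd2 : wt (A ++ T :: F :: E :: F :: B₀) < wt P := by
        have h := wt_slide_f (A ++ [T]) (F :: B₀)
        rw [hP]
        simpa using h
      rw [hq]
      refine Estar m₂ _ (F :: B₀) ?_ (by simpa using hEB₀) ?_
      · intro hmem
        rcases List.mem_append.1 hmem with h | h
        · exact hLE h
        · exact absurd (List.eq_of_mem_replicate h) (by simp)
      · rw [← hq]
        omega
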